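/- arXiv:1910.13096 — 3 statements merged into one kernel-verified Lean document; each statement's English description precedes it below -/
import Mathlib

section
/- Let d ≥ 2 be an integer and N ≥ 3√(d-1). For every x ∈ ℝ^{d-1} with |x| ≤ N (Euclidean norm) there exists r ∈ ℤ^{d-1} with r_1 + ... + r_{d-1} even, |r| ≤ N, and |x_j - 2r_j| ≤ 3 for all j. -/
theorem stmt_4 (d : ℕ) (hd : 2 ≤ d) (N : ℝ) (hN : N ≥ 3 * Real.sqrt (d - 1))
    (x : EuclideanSpace ℝ (Fin (d - 1))) (hx : ‖x‖ ≤ N) :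
    ∃ r : Fin (d - 1) → ℤ, Even (∑ j, r j) ∧
      ‖(show EuclideanSpace ℝ (Fin (d - 1)) from WithLp.toLp 2 (fun j => (r j : ℝ)))‖ ≤ N ∧
      ∀ j, |x j - 2 * (r j : ℝ)| ≤ 3 := by
  have hd1 : 0 < d - 1 := by omega
  have hfloor : ∀ j : Fin (d-1), 0 ≤ x j - 2*((⌊x j / 2⌋ : ℤ):ℝ) ∧
      x j - 2*((⌊x j / 2⌋:ℤ):ℝ) < 2 := by
    intro j
    have h1 := Int.floor_le (x j / 2)
    have h2 := Int.lt_floor_add_one (x j / 2)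
    constructor <;> nlinarith
  obtain ⟨r, hre, hrb⟩ : ∃ r : Fin (d-1) → ℤ, Even (∑ j, r j) ∧
      ∀ j, |x j - 2*(r j:ℝ)| ≤ 2 := by
    by_cases hpar : Even (∑ j, (⌊x j / 2⌋ : ℤ))
    · exact ⟨_, hpar, fun j => by
        have := hfloor j
        rw [abs_le]; constructor <;> linarith [this.1, this.2]⟩
    · set i0 : Fin (d-1) := ⟨0, hd1⟩
      refine ⟨Function.update (fun j => ⌊x j / 2⌋) i0 (⌊x i0 / 2⌋ + 1), ?_, ?_⟩
      · have h1 : ∑ j, Function.update (fun j => ⌊x j / 2⌋) i0 (⌊x i0 / 2⌋ + 1) j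
            = (∑ j, (⌊x j / 2⌋ : ℤ)) + 1 := by
          rw [Finset.sum_update_of_mem (Finset.mem_univ i0)]
          rw [← Finset.add_sum_erase Finset.univ (fun j => (⌊x j / 2⌋ : ℤ)) (Finset.mem_univ i0)]
          rw [Finset.sdiff_singleton_eq_erase]
          ring
        rw [h1, Int.even_add_one]
        exact hpar
      · intro j
        by_cases hj : j = i0
        · subst hj
          simp only [Function.update_self]
          have := hfloor i0
          push_cast
          rw [abs_le]; constructor <;> linarith [this.1, this.2]
        · rw [Function.update_of_ne hj]
          have := hfloor j
          rw [abs_le]; constructor <;> linarith [this.1, this.2]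
  refine ⟨r, hre, ?_, fun j => (hrb j).trans (by norm_num)⟩
  set v : EuclideanSpace ℝ (Fin (d-1)) := WithLp.toLp 2 (fun j => (r j : ℝ)) with hv
  have hcast : ((d - 1 : ℕ) : ℝ) = (d : ℝ) - 1 := by
    have : (1:ℕ) ≤ d := by omega
    push_cast [Nat.cast_sub this]
    ring
  have hsq : Real.sqrt 4 = 2 := by
    rw [show (4:ℝ) = 2^2 by norm_num, Real.sqrt_sq (by norm_num)]
  have hd1R : (0:ℝ) ≤ (d:ℝ) - 1 := by
    have : (2:ℝ) ≤ d := by exact_mod_cast hd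
    linarith
  have hdiff : ‖x - v - v‖ ≤ 2 * Real.sqrt ((d:ℝ) - 1) := by
    rw [EuclideanSpace.norm_eq]
    have hsum : ∑ j, ‖(x - v - v) j‖^2 ≤ ∑ _j : Fin (d-1), (4:ℝ) := by
      apply Finset.sum_le_sum
      intro j _
      have h1 : (x - v - v) j = x j - 2*(r j:ℝ) := by
        simp only [hv, PiLp.sub_apply, PiLp.toLp_apply]
        ring
      rw [h1, Real.norm_eq_abs, sq_abs]
      nlinarith [hrb j, abs_nonneg (x j - 2*(r j:ℝ)), sq_abs (x j - 2*(r j:ℝ)),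
        neg_abs_le (x j - 2*(r j:ℝ)), le_abs_self (x j - 2*(r j:ℝ))]
    have hcard : ∑ _j : Fin (d-1), (4:ℝ) = ((d:ℝ) - 1) * 4 := by
      rw [Finset.sum_const, Finset.card_univ, Fintype.card_fin]
      rw [nsmul_eq_mul, hcast]
    calc Real.sqrt (∑ j, ‖(x - v - v) j‖^2) ≤ Real.sqrt (((d:ℝ) - 1) * 4) := by
          apply Real.sqrt_le_sqrt
          rw [← hcard]; exact hsum
      _ = 2 * Real.sqrt ((d:ℝ) - 1) := by
          rw [Real.sqrt_mul hd1R, hsq]; ring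
  have h2v : ‖v + v‖ = 2 * ‖v‖ := by
    rw [← two_smul ℝ v, norm_smul]
    simp
  have htri : ‖v + v‖ ≤ ‖x‖ + ‖x - v - v‖ := by
    have : v + v = x - (x - v - v) := by abel
    rw [this]
    exact norm_sub_le _ _
  have hsqrtnn : 0 ≤ Real.sqrt ((d:ℝ) - 1) := Real.sqrt_nonneg _
  have hN' : 3 * Real.sqrt ((d:ℝ) - 1) ≤ N := hN
  show ‖v‖ ≤ N
  linarith [h2v ▸ htri]
end

section
/- There exists a constant c_5 > 0 depending only on d such that for every integer d ≥ 2 and all reals N ≥ b ≥ 3√(d-1), the sum over r ∈ ℤ^{d-1} with even coordinate sum and |r| ≤ N of 1/(|r|^2 + b^2)^{(d-1)/2} is at least c_5 · log(N/b). -/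
open Finset

set_option maxHeartbeats 1000000

lemma sq_rpow_half (x : ℝ) (hx : 0 ≤ x) (n : ℕ) : (x^2) ^ ((n:ℝ)/2) = x ^ n := by
  rw [← Real.rpow_natCast x 2, ← Real.rpow_mul hx, ← Real.rpow_natCast x n]
  congr 1; ring

lemma finite_T (n : ℕ) (N : ℝ) :
    Finite {r : Fin n → ℤ // Even (∑ j, r j) ∧ Real.sqrt (∑ j, ((r j:ℝ))^2) ≤ N} := by
  have hfin : {r : Fin n → ℤ | Even (∑ j, r j) ∧ Real.sqrt (∑ j, ((r j:ℝ))^2) ≤ N}.Finite := by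
    apply Set.Finite.subset (Set.Finite.pi (t := fun _ : Fin n => Set.Icc (-⌈N⌉) ⌈N⌉)
      (fun _ => Set.finite_Icc _ _))
    rintro r ⟨-, h2⟩
    simp only [Set.mem_pi, Set.mem_univ, true_implies, Set.mem_Icc]
    intro j
    have hs0 : (0:ℝ) ≤ ∑ j, ((r j:ℝ))^2 := Finset.sum_nonneg fun _ _ => sq_nonneg _
    have hN0 : 0 ≤ N := le_trans (Real.sqrt_nonneg _) h2
    have hsum : ∑ j, ((r j:ℝ))^2 ≤ N^2 := by
      have := Real.sq_sqrt hs0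
      nlinarith [Real.sqrt_nonneg (∑ j, ((r j:ℝ))^2)]
    have hj : ((r j:ℝ))^2 ≤ N^2 :=
      le_trans (Finset.single_le_sum (f := fun j => ((r j:ℝ))^2)
        (fun _ _ => sq_nonneg _) (mem_univ j)) hsum
    have habs : |(r j : ℝ)| ≤ N := by
      rw [← Real.sqrt_sq_eq_abs]
      calc Real.sqrt ((r j:ℝ)^2) ≤ Real.sqrt (N^2) := Real.sqrt_le_sqrt hj
        _ = N := Real.sqrt_sq hN0
    rw [abs_le] at habs
    constructor
    · have : -(⌈N⌉:ℝ) ≤ (r j : ℝ) := le_trans (by simpa using neg_le_neg (Int.le_ceil N)) habs.1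
      exact_mod_cast this
    · exact_mod_cast le_trans habs.2 (Int.le_ceil N)
  exact hfin.to_subtype

lemma aux_main (n : ℕ) (hn : 1 ≤ n) (b N : ℝ) (hb : 3 * Real.sqrt n ≤ b) (hN : b ≤ N) :
    min (((72*(n:ℝ)) ^ ((n:ℝ)/2))⁻¹) (((2*(n:ℝ)) ^ ((n:ℝ)/2) * 2^(n+1))⁻¹) / 4 * Real.log (N/b)
    ≤ ∑' r : {r : Fin n → ℤ // Even (∑ j, r j) ∧ Real.sqrt (∑ j, ((r j:ℝ))^2) ≤ N},
        1 / ((∑ j, ((r.1 j:ℝ))^2) + b^2) ^ ((n:ℝ)/2) := by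
  haveI : NeZero n := ⟨by omega⟩
  haveI := finite_T n N
  classical
  set sn := Real.sqrt n with hsn_def
  have hsn1 : (1:ℝ) ≤ sn := by
    rw [hsn_def, show (1:ℝ) = Real.sqrt 1 by simp]
    exact Real.sqrt_le_sqrt (by exact_mod_cast hn)
  have hsnpos : (0:ℝ) < sn := by linarith
  have hsn_sq : sn^2 = n := Real.sq_sqrt (by positivity)
  have hb3 : (3:ℝ) ≤ b := by nlinarith
  have hbpos : (0:ℝ) < b := by linarith
  have hNpos : (0:ℝ) < N := by linarith
  set M := ⌊b/(2*sn)⌋₊ with hM_def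
  set K := Nat.clog 2 ⌈b/(4*sn)⌉₊ with hK_def
  set m := Nat.log 2 ⌊N/b⌋₊ with hm_def
  have hM1 : 1 ≤ M := by
    apply Nat.le_floor
    rw [Nat.cast_one, le_div_iff₀ (by positivity)]
    nlinarith
  have hMle : (M:ℝ) ≤ b/(2*sn) := Nat.floor_le (by positivity)
  have hMge : b/(6*sn) ≤ (M:ℝ) := by
    have h1 := Nat.sub_one_lt_floor (b/(2*sn))
    rw [← hM_def] at h1
    rw [div_le_iff₀ (by positivity)]
    rw [div_sub' (by positivity)] at h1
    nlinarith [lt_of_lt_of_le ((div_lt_iff₀ (by positivity : (0:ℝ) < 2*sn)).mp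
      (lt_of_le_of_lt (le_refl _) h1)) (le_refl _)]
  have hKge : b ≤ 4*sn*(2:ℝ)^K := by
    have h1 : b/(4*sn) ≤ (⌈b/(4*sn)⌉₊ : ℝ) := Nat.le_ceil _
    have h2 : (⌈b/(4*sn)⌉₊ : ℝ) ≤ ((2^K : ℕ) : ℝ) := by
      exact_mod_cast Nat.le_pow_clog (by norm_num) _
    push_cast at h2
    rw [div_le_iff₀ (by positivity)] at h1
    nlinarith
  have hKle : (2:ℝ)^K ≤ b/(2*sn) := by
    have hbd1 : (1:ℝ) ≤ b/(2*sn) := by rw [le_div_iff₀ (by positivity)]; nlinarith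
    by_cases hc : ⌈b/(4*sn)⌉₊ ≤ 1
    · have hK0 : K = 0 := by
        rw [hK_def]
        rcases Nat.le_one_iff_eq_zero_or_eq_one.mp hc with h | h <;> simp [h]
      rw [hK0, pow_zero]; exact hbd1
    · push_neg at hc
      have h2 : 2^(K.pred) < ⌈b/(4*sn)⌉₊ := Nat.pow_pred_clog_lt_self (by norm_num) hc
      have h3 : ((2:ℕ)^(K.pred) : ℝ) ≤ (⌈b/(4*sn)⌉₊ : ℝ) - 1 := by
        have h2' : (2:ℕ)^(K.pred) + 1 ≤ ⌈b/(4*sn)⌉₊ := h2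
        have := (Nat.cast_le (α := ℝ)).mpr h2'
        push_cast at this ⊢; linarith
      have h4 : (⌈b/(4*sn)⌉₊ : ℝ) < b/(4*sn) + 1 :=
        Nat.ceil_lt_add_one (div_nonneg (by nlinarith) (by positivity))
      have h5 : (2:ℝ)^K ≤ 2 * (2:ℝ)^(K.pred) := by
        calc (2:ℝ)^K ≤ (2:ℝ)^(K.pred + 1) := by
              apply pow_le_pow_right₀ (by norm_num) (by rw [Nat.pred_eq_sub_one]; omega)
          _ = 2 * (2:ℝ)^(K.pred) := by ring
      have h6 : ((2:ℕ)^(K.pred) : ℝ) = (2:ℝ)^(K.pred) := by push_cast; ring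
      rw [h6] at h3
      have h7 : 2 * (b/(4*sn)) = b/(2*sn) := by ring
      linarith
  have hmle : (2:ℝ)^m ≤ N/b := by
    have h0 : (1:ℝ) ≤ N/b := (one_le_div hbpos).mpr hN
    have h1 : ⌊N/b⌋₊ ≠ 0 := by
      have : 1 ≤ ⌊N/b⌋₊ := Nat.le_floor (by exact_mod_cast h0)
      omega
    have h2 : (2:ℕ)^m ≤ ⌊N/b⌋₊ := Nat.pow_log_le_self 2 h1
    calc (2:ℝ)^m = ((2^m : ℕ) : ℝ) := by push_cast; ring
      _ ≤ (⌊N/b⌋₊ : ℝ) := by exact_mod_cast h2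
      _ ≤ N/b := Nat.floor_le (by positivity)
  have hmgt : N/b < (2:ℝ)^(m+1) := by
    have h1 : ⌊N/b⌋₊ < 2^(m+1) := Nat.lt_pow_succ_log_self (by norm_num) _
    have h2 : (⌊N/b⌋₊ : ℝ) + 1 ≤ ((2^(m+1) : ℕ) : ℝ) := by exact_mod_cast h1
    push_cast at h2
    calc N/b < ⌊N/b⌋₊ + 1 := Nat.lt_floor_add_one _
      _ ≤ (2:ℝ)^(m+1) := h2
  -- the finsets
  set A₀ : Finset (Fin n → ℤ) := Fintype.piFinset (fun _ => Finset.Ico (0:ℤ) (M:ℤ)) with hA_def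
  set shell : ℕ → Finset (Fin n → ℤ) := fun i => Fintype.piFinset
    (fun j => if j = 0 then Finset.Ico ((2:ℤ)^(K+1+i)) ((2:ℤ)^(K+2+i))
      else Finset.Ico (0:ℤ) ((2:ℤ)^(K+2+i))) with hshell_def
  set G : Finset (Fin n → ℤ) := A₀ ∪ (Finset.range (m-2)).biUnion shell with hG_def
  set g : (Fin n → ℤ) → ℝ :=
    fun s => 1 / ((∑ j, ((2 * s j : ℤ) : ℝ)^2) + b^2) ^ ((n:ℝ)/2) with hg_def
  -- pointwise sums of squares bounds
  have boxsum : ∀ s ∈ A₀, ∑ j, ((2 * s j : ℤ):ℝ)^2 ≤ b^2 := by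
    intro s hs
    have hM2 : (M:ℝ) * (2*sn) ≤ b := (le_div_iff₀ (by positivity)).mp hMle
    have hterm : ∀ j, ((2 * s j : ℤ):ℝ)^2 ≤ 4*(M:ℝ)^2 := by
      intro j
      have hj := Fintype.mem_piFinset.mp hs j
      rw [Finset.mem_Ico] at hj
      have h0 : (0:ℝ) ≤ (s j : ℝ) := by exact_mod_cast hj.1
      have h1 : (s j : ℝ) ≤ (M:ℝ) := by exact_mod_cast hj.2.le
      push_cast
      nlinarith
    calc ∑ j, ((2 * s j : ℤ):ℝ)^2 ≤ ∑ _j : Fin n, 4*(M:ℝ)^2 :=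
          Finset.sum_le_sum (fun j _ => hterm j)
      _ = n * (4*(M:ℝ)^2) := by
          rw [Finset.sum_const, Finset.card_univ, Fintype.card_fin, nsmul_eq_mul]
      _ ≤ b^2 := by
          have h4 : ((M:ℝ)*(2*sn))^2 ≤ b^2 := by
            nlinarith [mul_nonneg (Nat.cast_nonneg M) (by positivity : (0:ℝ) ≤ 2*sn)]
          have h5 : (n:ℝ)*(4*(M:ℝ)^2) = ((M:ℝ)*(2*sn))^2 := by rw [← hsn_sq]; ring
          rw [h5]; exact h4
  have shellsum : ∀ i : ℕ, ∀ s ∈ shell i,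
      ∑ j, ((2 * s j : ℤ):ℝ)^2 ≤ (n:ℝ) * ((2:ℝ)^(K+3+i))^2 := by
    intro i s hs
    have hterm : ∀ j, ((2 * s j : ℤ):ℝ)^2 ≤ ((2:ℝ)^(K+3+i))^2 := by
      intro j
      have hj := Fintype.mem_piFinset.mp hs j
      have hbound : (0:ℤ) ≤ s j ∧ s j < 2^(K+2+i) := by
        by_cases h0 : j = 0
        · subst h0
          rw [if_pos rfl, Finset.mem_Ico] at hj
          exact ⟨le_trans (by positivity) hj.1, hj.2⟩
        · rw [if_neg h0, Finset.mem_Ico] at hj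
          exact hj
      have h0 : (0:ℝ) ≤ (s j : ℝ) := by exact_mod_cast hbound.1
      have h1 : (s j : ℝ) ≤ (2:ℝ)^(K+2+i) := by
        have h2 : ((s j : ℤ):ℝ) ≤ (((2:ℤ)^(K+2+i) : ℤ):ℝ) := by exact_mod_cast hbound.2.le
        push_cast at h2
        exact h2
      have h3 : (2:ℝ)^(K+3+i) = 2 * (2:ℝ)^(K+2+i) := by
        rw [show K+3+i = (K+2+i)+1 by omega, pow_succ]; ring
      push_cast
      rw [h3]
      nlinarith
    calc ∑ j, ((2 * s j : ℤ):ℝ)^2 ≤ ∑ _j : Fin n, ((2:ℝ)^(K+3+i))^2 :=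
          Finset.sum_le_sum (fun j _ => hterm j)
      _ = (n:ℝ) * ((2:ℝ)^(K+3+i))^2 := by
          rw [Finset.sum_const, Finset.card_univ, Fintype.card_fin, nsmul_eq_mul]
  -- membership of doubled points
  have hGmem : ∀ s ∈ G, Even (∑ j, 2 * s j) ∧
      Real.sqrt (∑ j, ((2 * s j : ℤ):ℝ)^2) ≤ N := by
    intro s hs
    constructor
    · rw [← Finset.mul_sum]; exact even_two_mul _
    · rw [hG_def, Finset.mem_union] at hs
      rcases hs with hs | hs
      · calc Real.sqrt (∑ j, ((2 * s j : ℤ):ℝ)^2) ≤ Real.sqrt (b^2) :=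
              Real.sqrt_le_sqrt (boxsum s hs)
          _ = b := Real.sqrt_sq hbpos.le
          _ ≤ N := hN
      · obtain ⟨i, hi, hsi⟩ := Finset.mem_biUnion.mp hs
        have hsq1 : Real.sqrt (∑ j, ((2 * s j : ℤ):ℝ)^2) ≤ sn * (2:ℝ)^(K+3+i) := by
          have h1 := shellsum i s hsi
          have h2 : (n:ℝ) * ((2:ℝ)^(K+3+i))^2 = (sn * (2:ℝ)^(K+3+i))^2 := by
            rw [mul_pow, hsn_sq]
          calc Real.sqrt (∑ j, ((2 * s j : ℤ):ℝ)^2)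
              ≤ Real.sqrt ((sn * (2:ℝ)^(K+3+i))^2) := Real.sqrt_le_sqrt (by rw [← h2]; exact h1)
            _ = sn * (2:ℝ)^(K+3+i) := Real.sqrt_sq (by positivity)
        have hK3 : sn * (2:ℝ)^(K+3+i) ≤ b * 2^(2+i) := by
          have he : (2:ℝ)^(K+3+i) = (2:ℝ)^K * 2^(3+i) := by
            rw [← pow_add]; congr 1; omega
          rw [he]
          have h4 : sn * (2:ℝ)^K ≤ b/2 := by
            calc sn * (2:ℝ)^K ≤ sn * (b/(2*sn)) :=
                  mul_le_mul_of_nonneg_left hKle hsnpos.le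
              _ = b/2 := by field_simp
          calc sn * ((2:ℝ)^K * 2^(3+i)) = (sn * (2:ℝ)^K) * 2^(3+i) := by ring
            _ ≤ (b/2) * 2^(3+i) := mul_le_mul_of_nonneg_right h4 (by positivity)
            _ = b * 2^(2+i) := by rw [show (3:ℕ)+i = (2+i)+1 by omega, pow_succ]; ring
        have hi' : i < m - 2 := Finset.mem_range.mp hi
        have h5 : (2:ℝ)^(2+i) ≤ (2:ℝ)^m := pow_le_pow_right₀ one_le_two (by omega)
        have h8 : b * (2:ℝ)^m ≤ N := by
          calc b * (2:ℝ)^m ≤ b * (N/b) := mul_le_mul_of_nonneg_left hmle hbpos.le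
            _ = N := by field_simp
        calc Real.sqrt (∑ j, ((2 * s j : ℤ):ℝ)^2) ≤ sn * 2^(K+3+i) := hsq1
          _ ≤ b * 2^(2+i) := hK3
          _ ≤ b * 2^m := mul_le_mul_of_nonneg_left h5 hbpos.le
          _ ≤ N := h8
  -- sum over the box
  have sumA : ((72*(n:ℝ)) ^ ((n:ℝ)/2))⁻¹ ≤ ∑ s ∈ A₀, g s := by
    have hcard : A₀.card = M^n := by
      rw [hA_def, Fintype.card_piFinset]
      simp [Int.card_Ico]
    have hterm : ∀ s ∈ A₀, ((2*b^2) ^ ((n:ℝ)/2))⁻¹ ≤ g s := by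
      intro s hs
      rw [hg_def]
      simp only [one_div]
      apply inv_anti₀
      · apply Real.rpow_pos_of_pos
        exact add_pos_of_nonneg_of_pos (Finset.sum_nonneg fun _ _ => sq_nonneg _)
          (pow_pos hbpos 2)
      · apply Real.rpow_le_rpow
        · exact add_nonneg (Finset.sum_nonneg fun _ _ => sq_nonneg _) (sq_nonneg b)
        · have := boxsum s hs
          nlinarith
        · positivity
    have hkeyA : ((72*(n:ℝ)) ^ ((n:ℝ)/2))⁻¹ ≤ (M:ℝ)^n * ((2*b^2) ^ ((n:ℝ)/2))⁻¹ := by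
      have h1 : (b/(6*sn))^n ≤ (M:ℝ)^n := pow_le_pow_left₀ (by positivity) hMge n
      have hx : (72*(n:ℝ)) = (2*b^2) * ((6*sn/b)^2) := by
        have h : (6*sn/b)^2 = 36*(n:ℝ)/b^2 := by
          rw [div_pow, mul_pow, hsn_sq]; norm_num
        rw [h]; field_simp; ring
      have h2 : (72*(n:ℝ))^((n:ℝ)/2) = (2*b^2)^((n:ℝ)/2) * (6*sn/b)^n := by
        rw [hx, Real.mul_rpow (by positivity) (sq_nonneg _), sq_rpow_half _ (by positivity)]
      rw [h2, mul_inv]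
      have h3 : ((6*sn/b)^n)⁻¹ = (b/(6*sn))^n := by rw [← inv_pow, inv_div]
      rw [h3, mul_comm]
      exact mul_le_mul_of_nonneg_right h1 (by positivity)
    calc ((72*(n:ℝ)) ^ ((n:ℝ)/2))⁻¹ ≤ (M:ℝ)^n * ((2*b^2) ^ ((n:ℝ)/2))⁻¹ := hkeyA
      _ = A₀.card • ((2*b^2) ^ ((n:ℝ)/2))⁻¹ := by
          rw [hcard, nsmul_eq_mul]; push_cast; ring
      _ ≤ ∑ s ∈ A₀, g s := Finset.card_nsmul_le_sum _ _ _ hterm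
  -- sum over each shell
  have sumS : ∀ i ∈ Finset.range (m-2),
      (((2*(n:ℝ)) ^ ((n:ℝ)/2) * 2^(n+1))⁻¹ : ℝ) ≤ ∑ s ∈ shell i, g s := by
    intro i _
    have hcard : (shell i).card = 2^(K+1+i) * (2^(K+2+i))^(n-1) := by
      rw [hshell_def]
      rw [Fintype.card_piFinset]
      rw [← Finset.mul_prod_erase Finset.univ _ (Finset.mem_univ (0 : Fin n))]
      congr 1
      · rw [if_pos rfl, Int.card_Ico]
        have h1 : (2:ℤ)^(K+2+i) - 2^(K+1+i) = 2^(K+1+i) := by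
          rw [show K+2+i = (K+1+i)+1 by omega, pow_succ]; ring
        rw [h1, show ((2:ℤ)^(K+1+i)) = ((2^(K+1+i) : ℕ) : ℤ) by push_cast; ring,
          Int.toNat_natCast]
      · rw [Finset.prod_congr rfl (fun j hj => ?_), Finset.prod_const,
          Finset.card_erase_of_mem (Finset.mem_univ _), Finset.card_univ, Fintype.card_fin]
        rw [if_neg (Finset.ne_of_mem_erase hj), Int.card_Ico, sub_zero,
          show ((2:ℤ)^(K+2+i)) = ((2^(K+2+i) : ℕ) : ℤ) by push_cast; ring, Int.toNat_natCast]
    have hb2 : b^2 ≤ (n:ℝ) * ((2:ℝ)^(K+3+i))^2 := by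
      have h1 : (2:ℝ)^(K+2) ≤ (2:ℝ)^(K+3+i) := pow_le_pow_right₀ one_le_two (by omega)
      have h2 : 4*sn*(2:ℝ)^K = sn * 2^(K+2) := by rw [pow_add]; ring
      have h3 : b ≤ sn * (2:ℝ)^(K+3+i) := by
        rw [h2] at hKge
        calc b ≤ sn * (2:ℝ)^(K+2) := hKge
          _ ≤ sn * (2:ℝ)^(K+3+i) := mul_le_mul_of_nonneg_left h1 hsnpos.le
      have h4 : (n:ℝ) * ((2:ℝ)^(K+3+i))^2 = (sn * (2:ℝ)^(K+3+i))^2 := by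
        rw [mul_pow, hsn_sq]
      rw [h4]
      nlinarith [hbpos.le]
    have hterm : ∀ s ∈ shell i,
        ((2*(n:ℝ) * ((2:ℝ)^(K+3+i))^2) ^ ((n:ℝ)/2))⁻¹ ≤ g s := by
      intro s hs
      rw [hg_def]
      simp only [one_div]
      apply inv_anti₀
      · apply Real.rpow_pos_of_pos
        exact add_pos_of_nonneg_of_pos (Finset.sum_nonneg fun _ _ => sq_nonneg _)
          (pow_pos hbpos 2)
      · apply Real.rpow_le_rpow
        · exact add_nonneg (Finset.sum_nonneg fun _ _ => sq_nonneg _) (sq_nonneg b)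
        · have := shellsum i s hs
          nlinarith
        · positivity
    have hkey : ((2^(K+1+i) * (2^(K+2+i))^(n-1) : ℕ) : ℝ) *
        ((2*(n:ℝ) * ((2:ℝ)^(K+3+i))^2) ^ ((n:ℝ)/2))⁻¹
        = ((2*(n:ℝ)) ^ ((n:ℝ)/2) * 2^(n+1))⁻¹ := by
      have hnR : (0:ℝ) < (n:ℝ) := by exact_mod_cast hn
      have ht : (2*(n:ℝ) * ((2:ℝ)^(K+3+i))^2) ^ ((n:ℝ)/2)
          = (2*(n:ℝ))^((n:ℝ)/2) * ((2:ℝ)^(K+3+i))^n := by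
        rw [Real.mul_rpow (by positivity) (sq_nonneg _), sq_rpow_half _ (by positivity)]
      have hexp : (K+1+i) + ((K+2+i)*(n-1) + (n+1)) = (K+3+i)*n := by
        obtain ⟨n', hn'⟩ := Nat.exists_eq_add_of_le hn
        rw [hn']
        simp only [Nat.add_sub_cancel_left]
        ring
      have hsplit : ((2:ℝ)^(K+3+i))^n = 2^(K+1+i) * ((2:ℝ)^((K+2+i)*(n-1)) * 2^(n+1)) := by
        rw [← pow_mul, ← pow_add, ← pow_add, hexp]
      have hA : (0:ℝ) < (2*(n:ℝ))^((n:ℝ)/2) := Real.rpow_pos_of_pos (by linarith) _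
      rw [ht, hsplit]
      push_cast
      rw [← pow_mul]
      field_simp
    calc (((2*(n:ℝ)) ^ ((n:ℝ)/2) * 2^(n+1))⁻¹ : ℝ)
        = ((shell i).card : ℝ) * ((2*(n:ℝ) * ((2:ℝ)^(K+3+i))^2) ^ ((n:ℝ)/2))⁻¹ := by
          rw [hcard]; exact hkey.symm
      _ = (shell i).card • ((2*(n:ℝ) * ((2:ℝ)^(K+3+i))^2) ^ ((n:ℝ)/2))⁻¹ := by
          rw [nsmul_eq_mul]
      _ ≤ ∑ s ∈ shell i, g s := Finset.card_nsmul_le_sum _ _ _ hterm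
  -- disjointness
  have hkeyD : ∀ i j : ℕ, i < j → Disjoint (shell i) (shell j) := by
    intro i j hij
    rw [Finset.disjoint_left]
    intro s hsi hsj
    have h1 := Fintype.mem_piFinset.mp hsi 0
    have h2 := Fintype.mem_piFinset.mp hsj 0
    rw [if_pos rfl, Finset.mem_Ico] at h1 h2
    have h3 : (2:ℤ)^(K+2+i) ≤ 2^(K+1+j) := pow_le_pow_right₀ (by norm_num) (by omega)
    linarith [h1.2, h2.1]
  have hdisjS : (↑(Finset.range (m-2)) : Set ℕ).PairwiseDisjoint shell := by
    intro i _ j _ hne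
    rcases Nat.lt_or_ge i j with h | h
    · exact hkeyD i j h
    · exact (hkeyD j i (by omega)).symm
  have hdisjA : Disjoint A₀ ((Finset.range (m-2)).biUnion shell) := by
    rw [Finset.disjoint_left]
    intro s hsA hsB
    obtain ⟨i, _, hsi⟩ := Finset.mem_biUnion.mp hsB
    have h1 := Fintype.mem_piFinset.mp hsA 0
    rw [Finset.mem_Ico] at h1
    have h2 := Fintype.mem_piFinset.mp hsi 0
    rw [if_pos rfl, Finset.mem_Ico] at h2
    have hMK : (M:ℝ) ≤ ((2^(K+1) : ℕ):ℝ) := by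
      push_cast
      calc (M:ℝ) ≤ b/(2*sn) := hMle
        _ ≤ 2*(2:ℝ)^K := by rw [div_le_iff₀ (by positivity)]; nlinarith
        _ = 2^(K+1) := by ring
    have hMKn : M ≤ 2^(K+1) := by exact_mod_cast hMK
    have hMKz : (M:ℤ) ≤ (2:ℤ)^(K+1) := by exact_mod_cast hMKn
    have h3 : (2:ℤ)^(K+1) ≤ 2^(K+1+i) := pow_le_pow_right₀ (by norm_num) (by omega)
    linarith [h1.2, h2.1]
  -- assemble
  set c₀ : ℝ := ((72*(n:ℝ)) ^ ((n:ℝ)/2))⁻¹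
  set c₁ : ℝ := (((2*(n:ℝ)) ^ ((n:ℝ)/2) * 2^(n+1))⁻¹ : ℝ)
  have hnR : (1:ℝ) ≤ (n:ℝ) := by exact_mod_cast hn
  have hc₀pos : 0 < c₀ := by
    apply inv_pos.mpr; apply Real.rpow_pos_of_pos; linarith
  have hc₁pos : 0 < c₁ := by
    apply inv_pos.mpr; apply mul_pos
    · apply Real.rpow_pos_of_pos; linarith
    · positivity
  have hGsum : c₀ + (m-2 : ℕ) * c₁ ≤ ∑ s ∈ G, g s := by
    rw [hG_def, Finset.sum_union hdisjA, Finset.sum_biUnion hdisjS]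
    gcongr
    calc ((m-2 : ℕ) : ℝ) * c₁ = ∑ _i ∈ Finset.range (m-2), c₁ := by
          rw [Finset.sum_const, Finset.card_range, nsmul_eq_mul]
      _ ≤ ∑ i ∈ Finset.range (m-2), ∑ s ∈ shell i, g s := Finset.sum_le_sum sumS
  -- tsum ≥ finset sum
  have htsum : ∑ s ∈ G, g s ≤ ∑' r : {r : Fin n → ℤ // Even (∑ j, r j) ∧
      Real.sqrt (∑ j, ((r j:ℝ))^2) ≤ N}, 1 / ((∑ j, ((r.1 j:ℝ))^2) + b^2) ^ ((n:ℝ)/2) := by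
    rw [← Finset.tsum_subtype G g]
    apply Summable.tsum_le_tsum_of_inj
      (fun s : {s // s ∈ G} => (⟨fun j => 2 * s.1 j, (hGmem s.1 s.2).1, (hGmem s.1 s.2).2⟩ :
        {r : Fin n → ℤ // Even (∑ j, r j) ∧ Real.sqrt (∑ j, ((r j:ℝ))^2) ≤ N}))
    · intro s t h
      have h2 := congrArg Subtype.val h
      simp only at h2
      apply Subtype.ext
      funext j
      have := congrFun h2 j
      omega
    · intro c _
      positivity
    · intro s
      exact le_of_eq rfl
    · exact Summable.of_finite
    · exact Summable.of_finite
  -- log bound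
  have hlog : Real.log (N/b) ≤ (m:ℝ) + 1 := by
    have h1 : Real.log (N/b) ≤ Real.log ((2:ℝ)^(m+1)) :=
      Real.log_le_log (by positivity) hmgt.le
    rw [Real.log_pow] at h1
    have h2 : Real.log 2 ≤ 1 := by
      have := Real.log_le_sub_one_of_pos (by norm_num : (0:ℝ) < 2)
      linarith
    calc Real.log (N/b) ≤ (m+1 : ℕ) * Real.log 2 := h1
      _ ≤ (m+1 : ℕ) * 1 := mul_le_mul_of_nonneg_left h2 (by positivity)
      _ = (m:ℝ) + 1 := by push_cast; ring
  have hnat : (m:ℝ) + 1 ≤ 4 * (1 + (m-2 : ℕ)) := by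
    have : m + 1 ≤ 4 * (1 + (m-2)) := by omega
    exact_mod_cast this
  have hmin : min c₀ c₁ ≤ c₀ := min_le_left _ _
  have hmin' : min c₀ c₁ ≤ c₁ := min_le_right _ _
  have hminpos : 0 < min c₀ c₁ := lt_min hc₀pos hc₁pos
  have hlog0 : 0 ≤ Real.log (N/b) := Real.log_nonneg ((one_le_div hbpos).mpr hN)
  calc min c₀ c₁ / 4 * Real.log (N/b) ≤ min c₀ c₁ / 4 * ((m:ℝ)+1) :=
        mul_le_mul_of_nonneg_left hlog (by positivity)
    _ ≤ min c₀ c₁ / 4 * (4 * (1 + (m-2:ℕ))) :=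
        mul_le_mul_of_nonneg_left hnat (by positivity)
    _ = min c₀ c₁ * (1 + (m-2:ℕ)) := by ring
    _ ≤ c₀ + (m-2:ℕ) * c₁ := by
        have h1 : min c₀ c₁ * 1 ≤ c₀ := by linarith
        nlinarith [mul_le_mul_of_nonneg_left hmin' (by positivity : (0:ℝ) ≤ ((m-2:ℕ):ℝ))]
    _ ≤ ∑ s ∈ G, g s := hGsum
    _ ≤ _ := htsum

theorem stmt_11 (d : ℕ) (hd : 2 ≤ d) :
    ∃ c₅ : ℝ, 0 < c₅ ∧ ∀ b N : ℝ, 3 * Real.sqrt (d - 1) ≤ b → b ≤ N →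
      ∑' r : {r : Fin (d - 1) → ℤ //
          Even (∑ j, r j) ∧ Real.sqrt (∑ j, ((r j : ℝ)) ^ 2) ≤ N},
        1 / ((∑ j, ((r.1 j : ℝ)) ^ 2) + b ^ 2) ^ (((d : ℝ) - 1) / 2) ≥
      c₅ * Real.log (N / b) := by
  set n := d - 1 with hn_def
  have hn : 1 ≤ n := by omega
  have h1 : ((d:ℝ) - 1) = ((n:ℕ):ℝ) := by
    rw [hn_def, Nat.cast_sub (by omega)]; norm_num
  have hnR : (1:ℝ) ≤ (n:ℝ) := by exact_mod_cast hn
  have hc₀pos : 0 < (((72*(n:ℝ)) ^ ((n:ℝ)/2))⁻¹ : ℝ) := by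
    apply inv_pos.mpr; apply Real.rpow_pos_of_pos; linarith
  have hc₁pos : 0 < ((((2*(n:ℝ)) ^ ((n:ℝ)/2) * 2^(n+1))⁻¹ : ℝ)) := by
    apply inv_pos.mpr; apply mul_pos
    · apply Real.rpow_pos_of_pos; linarith
    · positivity
  refine ⟨min (((72*(n:ℝ)) ^ ((n:ℝ)/2))⁻¹) (((2*(n:ℝ)) ^ ((n:ℝ)/2) * 2^(n+1))⁻¹) / 4,
    by positivity, ?_⟩
  intro b N hb hN
  rw [ge_iff_le]
  have hb' : 3 * Real.sqrt n ≤ b := by rw [← h1]; exact hb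
  have := aux_main n hn b N hb' hN
  simpa only [h1] using this
end

section
/- Let K ⊂ ℝ^d be closed and let S_1, ..., S_m : K → K be maps such that there exist b_1, ..., b_m ∈ (0,1) with b_j|x−y| ≤ |S_j(x) − S_j(y)| ≤ c|x−y| for some c < 1 and all x,y ∈ K. Let K_0 be a nonempty compact subset of K with K_0 = ∪_{j=1}^m S_j(K_0) and S_j(K_0) ∩ S_k(K_0) = ∅ for j ≠ k. If t > 0 satisfies Σ_{j=1}^m b_j^t = 1, then the Hausdorff dimension of K_0 is at least t. -/
open Set Metric MeasureTheory Filter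

namespace Falconer97

variable {m : ℕ}

/-- cumulative sums of `q` -/
def cum (q : Fin m → ℝ) (n : ℕ) : ℝ := ∑ j : Fin m, if (j : ℕ) < n then q j else 0

lemma cum_zero (q : Fin m → ℝ) : cum q 0 = 0 := by simp [cum]

lemma cum_succ (q : Fin m → ℝ) (j : Fin m) : cum q ((j : ℕ) + 1) = cum q j + q j := by
  unfold cum
  have h : (∑ i : Fin m, if (i : ℕ) < (j : ℕ) + 1 then q i else 0)
      = ∑ i : Fin m, ((if (i : ℕ) < (j : ℕ) then q i else 0) + if i = j then q i else 0) := by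
    refine Finset.sum_congr rfl fun i _ => ?_
    by_cases h : i = j
    · subst h; simp
    · have hne : (i : ℕ) ≠ (j : ℕ) := fun hh => h (Fin.ext hh)
      have : ((i : ℕ) < (j : ℕ) + 1) ↔ ((i : ℕ) < (j : ℕ)) := by omega
      simp [h, this]
  rw [h, Finset.sum_add_distrib, Finset.sum_ite_eq' Finset.univ j q]
  simp

lemma cum_mono (q : Fin m → ℝ) (hq : ∀ j, 0 ≤ q j) : Monotone (cum q) := by
  intro a b hab
  refine Finset.sum_le_sum fun i _ => ?_
  split_ifs with h1 h2
  · exact le_rfl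
  · exact absurd (lt_of_lt_of_le h1 hab) h2
  · exact hq i
  · exact le_rfl

lemma cum_nonneg (q : Fin m → ℝ) (hq : ∀ j, 0 ≤ q j) (n : ℕ) : 0 ≤ cum q n := by
  have := cum_mono q hq (Nat.zero_le n)
  rwa [cum_zero] at this

lemma cum_top (q : Fin m → ℝ) : cum q m = ∑ j, q j := by
  unfold cum
  exact Finset.sum_congr rfl fun i _ => if_pos i.isLt

/-- the digit of `x`: least `j` with `x < cum q (j+1)`, with junk values. -/
noncomputable def digit (q : Fin m → ℝ) (hm : 0 < m) (x : ℝ) : Fin m :=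
  (Fin.find? fun j : Fin m => x < cum q ((j : ℕ) + 1)).getD ⟨0, hm⟩

lemma digit_mem (q : Fin m → ℝ) (hm : 0 < m) (hq : ∀ j, 0 ≤ q j) (hs : cum q m = 1)
    {x : ℝ} (hx : x ∈ Set.Ico (0 : ℝ) 1) :
    cum q (digit q hm x) ≤ x ∧ x < cum q ((digit q hm x : ℕ) + 1) := by
  have hex : ∃ j : Fin m, x < cum q ((j : ℕ) + 1) := by
    refine ⟨⟨m - 1, by omega⟩, ?_⟩
    have h1 : (m - 1) + 1 = m := by omega
    simp only [h1]
    rw [hs]; exact hx.2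
  obtain ⟨i, hi⟩ := Option.isSome_iff_exists.1 ((Fin.isSome_find?_iff (p := fun j : Fin m => decide (x < cum q ((j : ℕ) + 1)))).2 (by simpa using hex))
  have hi' : i ∈ Fin.find? fun j : Fin m => x < cum q ((j : ℕ) + 1) := hi
  have hdig : digit q hm x = i := by unfold digit; rw [hi]; rfl
  rw [hdig]
  constructor
  · by_cases h0 : (i : ℕ) = 0
    · rw [h0, cum_zero]; exact hx.1
    · have hi1 : (i : ℕ) - 1 < m := by omega
      have hlt : (⟨(i : ℕ) - 1, hi1⟩ : Fin m) < i := by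
        rw [Fin.lt_def]; simp; omega
      have hmin : ¬ x < cum q (((⟨(i : ℕ) - 1, hi1⟩ : Fin m) : ℕ) + 1) := by
          simpa using (Fin.mem_find?_iff.1 hi').2 _ hlt
      push_neg at hmin
      have : (i : ℕ) - 1 + 1 = (i : ℕ) := by omega
      rwa [this] at hmin
  · simpa using (Fin.mem_find?_iff.1 hi').1

lemma digit_eq_iff (q : Fin m → ℝ) (hm : 0 < m) (hq : ∀ j, 0 ≤ q j) (hs : cum q m = 1)
    {x : ℝ} (hx : x ∈ Set.Ico (0 : ℝ) 1) {j : Fin m} :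
    digit q hm x = j ↔ cum q j ≤ x ∧ x < cum q ((j : ℕ) + 1) := by
  constructor
  · rintro rfl; exact digit_mem q hm hq hs hx
  · rintro ⟨h1, h2⟩
    obtain ⟨m1, m2⟩ := digit_mem q hm hq hs hx
    by_contra hne
    rcases Ne.lt_or_gt hne with h | h
    · have : ((digit q hm x : ℕ) + 1) ≤ (j : ℕ) := by
        have := Fin.lt_def.1 h; omega
      have := cum_mono q hq this
      linarith
    · have : ((j : ℕ) + 1) ≤ (digit q hm x : ℕ) := by
        have := Fin.lt_def.1 h; omega
      have := cum_mono q hq this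
      linarith

lemma measurable_digit (q : Fin m → ℝ) (hm : 0 < m) : Measurable (digit q hm) := by
  have h1 : ∀ j : Fin m, MeasurableSet
      {x : ℝ | Fin.find? (fun i : Fin m => x < cum q ((i : ℕ) + 1)) = some j} := by
    intro j
    have heq : {x : ℝ | Fin.find? (fun i : Fin m => x < cum q ((i : ℕ) + 1)) = some j}
        = Set.Iio (cum q ((j : ℕ) + 1)) ∩ ⋂ i : Fin m, {x : ℝ | x < cum q ((i : ℕ) + 1) → j ≤ i} := by
      ext x
      simp only [Set.mem_setOf_eq, Set.mem_inter_iff, Set.mem_Iio, Set.mem_iInter]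
      rw [← Option.mem_def, Fin.mem_find?_iff]
      simp only [decide_eq_true_eq]
      exact ⟨fun ⟨h1, h2⟩ => ⟨h1, fun i hi => not_lt.1 fun h => h2 i h hi⟩,
        fun ⟨h1, h2⟩ => ⟨h1, fun i h hi => absurd (h2 i hi) (not_le.2 h)⟩⟩
    rw [heq]
    refine measurableSet_Iio.inter (MeasurableSet.iInter fun i => ?_)
    by_cases hji : j ≤ i
    · have : {x : ℝ | x < cum q ((i : ℕ) + 1) → j ≤ i} = Set.univ := by
        ext x; simp [hji]
      rw [this]; exact MeasurableSet.univ
    · have : {x : ℝ | x < cum q ((i : ℕ) + 1) → j ≤ i} = Set.Ici (cum q ((i : ℕ) + 1)) := by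
        ext x; simp [hji, not_lt]
      rw [this]; exact measurableSet_Ici
  have h0 : MeasurableSet {x : ℝ | Fin.find? (fun i : Fin m => x < cum q ((i : ℕ) + 1)) = none} := by
    have heq : {x : ℝ | Fin.find? (fun i : Fin m => x < cum q ((i : ℕ) + 1)) = none}
        = ⋂ i : Fin m, Set.Ici (cum q ((i : ℕ) + 1)) := by
      ext x; simp [Fin.find?_eq_none_iff, not_lt]
    rw [heq]; exact MeasurableSet.iInter fun i => measurableSet_Ici
  refine measurable_to_countable' fun j => ?_
  by_cases hj : j = (⟨0, hm⟩ : Fin m)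
  · have heq : digit q hm ⁻¹' {j}
        = {x : ℝ | Fin.find? (fun i : Fin m => x < cum q ((i : ℕ) + 1)) = some j}
          ∪ {x : ℝ | Fin.find? (fun i : Fin m => x < cum q ((i : ℕ) + 1)) = none} := by
      ext x
      simp only [Set.mem_preimage, Set.mem_singleton_iff, Set.mem_union, Set.mem_setOf_eq]
      unfold digit
      cases h : Fin.find? fun i : Fin m => x < cum q ((i : ℕ) + 1) with
      | none => simp [hj]
      | some a => simp
    rw [heq]; exact (h1 j).union h0
  · have heq : digit q hm ⁻¹' {j}
        = {x : ℝ | Fin.find? (fun i : Fin m => x < cum q ((i : ℕ) + 1)) = some j} := by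
      ext x
      simp only [Set.mem_preimage, Set.mem_singleton_iff, Set.mem_setOf_eq]
      unfold digit
      cases h : Fin.find? fun i : Fin m => x < cum q ((i : ℕ) + 1) with
      | none => simpa using fun hh => absurd hh.symm hj
      | some a => simp
    rw [heq]; exact h1 j

/-- rescaling map -/
noncomputable def rescale (q : Fin m → ℝ) (hm : 0 < m) (x : ℝ) : ℝ :=
  (x - cum q (digit q hm x)) / q (digit q hm x)

lemma measurable_rescale (q : Fin m → ℝ) (hm : 0 < m) : Measurable (rescale q hm) := by
  have hd := measurable_digit q hm
  have h1 : Measurable fun x : ℝ => cum q (digit q hm x) :=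
    (measurable_of_countable fun j : Fin m => cum q (j : ℕ)).comp hd
  have h2 : Measurable fun x : ℝ => q (digit q hm x) :=
    (measurable_of_countable q).comp hd
  exact (measurable_id.sub h1).div h2

/-- iterated maps along a word -/
def SW {α : Type*} (S : Fin m → α → α) : List (Fin m) → α → α
  | [] => id
  | j :: w => S j ∘ SW S w

/-- product of `q` along a word -/
def PP (q : Fin m → ℝ) (w : List (Fin m)) : ℝ := (w.map q).prod

@[simp] lemma PP_nil (q : Fin m → ℝ) : PP q [] = 1 := by simp [PP]

@[simp] lemma PP_cons (q : Fin m → ℝ) (j : Fin m) (w : List (Fin m)) :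
    PP q (j :: w) = q j * PP q w := by simp [PP]

lemma PP_append (q : Fin m → ℝ) (u v : List (Fin m)) : PP q (u ++ v) = PP q u * PP q v := by
  simp [PP]

lemma PP_pos (q : Fin m → ℝ) (hq : ∀ j, 0 < q j) (w : List (Fin m)) : 0 < PP q w := by
  induction w with
  | nil => simp
  | cons j w ih => simpa using mul_pos (hq j) ih

lemma PP_le_one (q : Fin m → ℝ) (hq : ∀ j, 0 < q j) (hq1 : ∀ j, q j ≤ 1) (w : List (Fin m)) :
    PP q w ≤ 1 := by
  induction w with
  | nil => simp
  | cons j w ih =>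
    simp only [PP_cons]
    calc q j * PP q w ≤ 1 * 1 := by
          apply mul_le_mul (hq1 j) ih (PP_pos q hq w).le zero_le_one
      _ = 1 := by ring

lemma PP_prefix_le (q : Fin m → ℝ) (hq : ∀ j, 0 < q j) (hq1 : ∀ j, q j ≤ 1)
    (u v : List (Fin m)) : PP q (u ++ v) ≤ PP q u := by
  rw [PP_append]
  calc PP q u * PP q v ≤ PP q u * 1 :=
        mul_le_mul_of_nonneg_left (PP_le_one q hq hq1 v) (PP_pos q hq u).le
    _ = PP q u := by ring

/-- left endpoints of word intervals -/
def LL (q : Fin m → ℝ) : List (Fin m) → ℝ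
  | [] => 0
  | j :: w => cum q j + q j * LL q w

@[simp] lemma LL_nil (q : Fin m → ℝ) : LL q [] = 0 := rfl

@[simp] lemma LL_cons (q : Fin m → ℝ) (j : Fin m) (w : List (Fin m)) :
    LL q (j :: w) = cum q j + q j * LL q w := rfl

lemma LL_invariant (q : Fin m → ℝ) (hq : ∀ j, 0 < q j) (hs : cum q m = 1) :
    ∀ w : List (Fin m), 0 ≤ LL q w ∧ LL q w + PP q w ≤ 1 := by
  intro w
  induction w with
  | nil => simp
  | cons j w ih =>
    obtain ⟨h1, h2⟩ := ih
    constructor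
    · have hc := cum_nonneg q (fun i => (hq i).le) (j : ℕ)
      simp only [LL_cons]
      exact add_nonneg hc (mul_nonneg (hq j).le h1)
    · have hc : cum q ((j : ℕ) + 1) ≤ 1 := by
        rw [← hs]; exact cum_mono q (fun i => (hq i).le) (by omega)
      have : LL q (j :: w) + PP q (j :: w) = cum q j + q j * (LL q w + PP q w) := by
        simp; ring
      rw [this]
      calc cum q j + q j * (LL q w + PP q w) ≤ cum q j + q j * 1 := by
            have := mul_le_mul_of_nonneg_left h2 (hq j).le
            linarith
        _ = cum q ((j : ℕ) + 1) := by rw [cum_succ]; ring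
        _ ≤ 1 := hc

/-- word of first `k` digits -/
def wordOf (ω : ℕ → Fin m) (k : ℕ) : List (Fin m) := List.ofFn fun i : Fin k => ω i

@[simp] lemma wordOf_zero (ω : ℕ → Fin m) : wordOf ω 0 = [] := rfl

lemma wordOf_succ (ω : ℕ → Fin m) (k : ℕ) :
    wordOf ω (k + 1) = ω 0 :: wordOf (fun n => ω (n + 1)) k := by
  unfold wordOf
  rw [List.ofFn_succ]
  rfl

lemma wordOf_succ' (ω : ℕ → Fin m) (k : ℕ) :
    wordOf ω (k + 1) = wordOf ω k ++ [ω k] := by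
  unfold wordOf
  rw [List.ofFn_succ']
  simp [List.concat_eq_append]

lemma wordOf_add (ω : ℕ → Fin m) (k n : ℕ) :
    wordOf ω (k + n) = wordOf ω k ++ wordOf (fun i => ω (k + i)) n := by
  induction n with
  | zero => simp
  | succ n ih => rw [← Nat.add_assoc, wordOf_succ', ih, wordOf_succ']; simp

lemma wordOf_length (ω : ℕ → Fin m) (k : ℕ) : (wordOf ω k).length = k := by
  simp [wordOf]

/-- the digit sequence of a real number -/
noncomputable def seqD (q : Fin m → ℝ) (hm : 0 < m) (x : ℝ) (n : ℕ) : Fin m :=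
  digit q hm ((rescale q hm)^[n] x)

lemma seqD_zero (q : Fin m → ℝ) (hm : 0 < m) (x : ℝ) : seqD q hm x 0 = digit q hm x := rfl

lemma seqD_succ (q : Fin m → ℝ) (hm : 0 < m) (x : ℝ) (n : ℕ) :
    seqD q hm x (n + 1) = seqD q hm (rescale q hm x) n := by
  unfold seqD
  rw [Function.iterate_succ_apply]

lemma measurable_seqD (q : Fin m → ℝ) (hm : 0 < m) (n : ℕ) :
    Measurable fun x => seqD q hm x n := by
  unfold seqD
  have : Measurable ((rescale q hm)^[n]) := by
    induction n with
    | zero => exact measurable_id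
    | succ n ih => rw [Function.iterate_succ]; exact ih.comp (measurable_rescale q hm)
  exact (measurable_digit q hm).comp this

lemma prefix_iff (q : Fin m → ℝ) (hm : 0 < m) (hq : ∀ j, 0 < q j) (hs : cum q m = 1) :
    ∀ (w : List (Fin m)) (x : ℝ), x ∈ Set.Ico (0 : ℝ) 1 →
      (wordOf (seqD q hm x) w.length = w ↔ LL q w ≤ x ∧ x < LL q w + PP q w) := by
  intro w
  induction w with
  | nil =>
    intro x hx
    simpa using hx
  | cons j w ih =>
    intro x hx
    have hq' : ∀ i, 0 ≤ q i := fun i => (hq i).le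
    have hcons : wordOf (seqD q hm x) (j :: w).length = j :: w ↔
        (digit q hm x = j ∧ wordOf (seqD q hm (rescale q hm x)) w.length = w) := by
      show wordOf (seqD q hm x) (w.length + 1) = j :: w ↔ _
      rw [wordOf_succ]
      have htail : (wordOf (fun n => seqD q hm x (n + 1)) w.length)
          = wordOf (seqD q hm (rescale q hm x)) w.length := by
        unfold wordOf
        exact congrArg List.ofFn (funext fun i => seqD_succ q hm x i)
      rw [htail, seqD_zero]
      simp
    rw [hcons]
    have hdig := digit_eq_iff q hm hq' hs hx (j := j)
    obtain ⟨hL0, hLP1⟩ := LL_invariant q hq hs w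
    constructor
    · rintro ⟨hdj, hw⟩
      obtain ⟨ha, hb⟩ := hdig.1 hdj
      have hry : rescale q hm x = (x - cum q j) / q j := by
        unfold rescale; rw [hdj]
      have hr01 : rescale q hm x ∈ Set.Ico (0 : ℝ) 1 := by
        rw [hry]
        constructor
        · apply div_nonneg (by linarith) (hq j).le
        · rw [div_lt_one (hq j)]
          have := cum_succ q j
          linarith
      obtain ⟨h1, h2⟩ := (ih (rescale q hm x) hr01).1 hw
      rw [hry] at h1 h2
      rw [le_div_iff₀ (hq j)] at h1
      rw [div_lt_iff₀ (hq j)] at h2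
      constructor
      · simp only [LL_cons]; linarith
      · simp only [LL_cons, PP_cons]; nlinarith [PP_pos q hq w]
    · rintro ⟨h1, h2⟩
      simp only [LL_cons] at h1
      simp only [LL_cons, PP_cons] at h2
      have hdj : digit q hm x = j := by
        apply hdig.2
        constructor
        · nlinarith [mul_nonneg (hq j).le hL0]
        · rw [cum_succ q j]
          nlinarith [mul_le_mul_of_nonneg_left hLP1 (hq j).le]
      have hry : rescale q hm x = (x - cum q j) / q j := by
        unfold rescale; rw [hdj]
      have hr1 : LL q w ≤ rescale q hm x := by
        rw [hry, le_div_iff₀ (hq j)]; linarith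
      have hr2 : rescale q hm x < LL q w + PP q w := by
        rw [hry, div_lt_iff₀ (hq j)]; linarith
      have hr01 : rescale q hm x ∈ Set.Ico (0 : ℝ) 1 := by
        constructor
        · linarith
        · calc rescale q hm x < LL q w + PP q w := hr2
            _ ≤ 1 := hLP1
      exact ⟨hdj, (ih (rescale q hm x) hr01).2 ⟨hr1, hr2⟩⟩

lemma interval_eq (q : Fin m → ℝ) (hm : 0 < m) (hq : ∀ j, 0 < q j) (hs : cum q m = 1)
    (w : List (Fin m)) :
    {x : ℝ | x ∈ Set.Ico (0 : ℝ) 1 ∧ wordOf (seqD q hm x) w.length = w}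
      = Set.Ico (LL q w) (LL q w + PP q w) := by
  obtain ⟨hL0, hLP1⟩ := LL_invariant q hq hs w
  ext x
  simp only [Set.mem_setOf_eq, Set.mem_Ico]
  constructor
  · rintro ⟨hx, h⟩
    exact (prefix_iff q hm hq hs w x hx).1 h
  · intro hx
    have hx01 : x ∈ Set.Ico (0 : ℝ) 1 := by
      constructor
      · linarith [hx.1]
      · calc x < LL q w + PP q w := hx.2
          _ ≤ 1 := hLP1
    exact ⟨hx01, (prefix_iff q hm hq hs w x hx01).2 ⟨hx.1, hx.2⟩⟩

section Geometry

variable {E : Type*} [NormedAddCommGroup E]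

@[simp] lemma SW_nil {α : Type*} (S : Fin m → α → α) : SW S [] = id := rfl

@[simp] lemma SW_cons {α : Type*} (S : Fin m → α → α) (j : Fin m) (w : List (Fin m)) :
    SW S (j :: w) = S j ∘ SW S w := rfl

lemma SW_append {α : Type*} (S : Fin m → α → α) (u v : List (Fin m)) :
    SW S (u ++ v) = SW S u ∘ SW S v := by
  induction u with
  | nil => rfl
  | cons j u ih => simp [ih]; rfl

lemma SW_mapsTo {α : Type*} (S : Fin m → α → α) (K : Set α)
    (hS : ∀ j, Set.MapsTo (S j) K K) : ∀ w, Set.MapsTo (SW S w) K K := by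
  intro w
  induction w with
  | nil => exact Set.mapsTo_id K
  | cons j w ih => exact (hS j).comp ih

lemma SW_image_subset {α : Type*} (S : Fin m → α → α) (K₀ : Set α)
    (h : ∀ j, S j '' K₀ ⊆ K₀) : ∀ w, SW S w '' K₀ ⊆ K₀ := by
  intro w
  induction w with
  | nil => simp
  | cons j w ih =>
    rw [SW_cons, Set.image_comp]
    exact (Set.image_mono (f := S j) ih).trans (h j)

lemma SW_lower (S : Fin m → E → E) (K : Set E) (b : Fin m → ℝ)
    (hS : ∀ j, Set.MapsTo (S j) K K) (hb0 : ∀ j, 0 ≤ b j)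
    (hlow : ∀ j, ∀ x ∈ K, ∀ y ∈ K, b j * ‖x - y‖ ≤ ‖S j x - S j y‖) :
    ∀ w, ∀ x ∈ K, ∀ y ∈ K, PP b w * ‖x - y‖ ≤ ‖SW S w x - SW S w y‖ := by
  intro w
  induction w with
  | nil => simp
  | cons j w ih =>
    intro x hx y hy
    have hx' := SW_mapsTo S K hS w hx
    have hy' := SW_mapsTo S K hS w hy
    have h1 := hlow j _ hx' _ hy'
    have h2 := ih x hx y hy
    simp only [PP_cons, SW_cons, Function.comp_apply]
    calc b j * PP b w * ‖x - y‖ = b j * (PP b w * ‖x - y‖) := by ring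
      _ ≤ b j * ‖SW S w x - SW S w y‖ := mul_le_mul_of_nonneg_left h2 (hb0 j)
      _ ≤ ‖S j (SW S w x) - S j (SW S w y)‖ := h1

lemma SW_upper (S : Fin m → E → E) (K : Set E) (c : ℝ)
    (hS : ∀ j, Set.MapsTo (S j) K K) (hc0 : 0 ≤ c)
    (hup : ∀ j, ∀ x ∈ K, ∀ y ∈ K, ‖S j x - S j y‖ ≤ c * ‖x - y‖) :
    ∀ w, ∀ x ∈ K, ∀ y ∈ K, ‖SW S w x - SW S w y‖ ≤ c ^ w.length * ‖x - y‖ := by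
  intro w
  induction w with
  | nil => simp
  | cons j w ih =>
    intro x hx y hy
    have hx' := SW_mapsTo S K hS w hx
    have hy' := SW_mapsTo S K hS w hy
    have h1 := hup j _ hx' _ hy'
    have h2 := ih x hx y hy
    simp only [SW_cons, Function.comp_apply, List.length_cons]
    calc ‖S j (SW S w x) - S j (SW S w y)‖ ≤ c * ‖SW S w x - SW S w y‖ := h1
      _ ≤ c * (c ^ w.length * ‖x - y‖) := mul_le_mul_of_nonneg_left h2 hc0
      _ = c ^ (w.length + 1) * ‖x - y‖ := by ring

lemma SW_continuousOn (S : Fin m → E → E) (K : Set E)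
    (hS : ∀ j, Set.MapsTo (S j) K K)
    (hcont : ∀ j, ContinuousOn (S j) K) :
    ∀ w, ContinuousOn (SW S w) K := by
  intro w
  induction w with
  | nil => exact continuousOn_id
  | cons j w ih => exact (hcont j).comp ih (SW_mapsTo S K hS w)

end Geometry

end Falconer97
open Set Metric MeasureTheory Filter Topology Falconer97 NNReal ENNReal in
theorem stmt_18 (d m : ℕ) (K K₀ : Set (EuclideanSpace ℝ (Fin d)))
    (hK : IsClosed K)
    (S : Fin m → EuclideanSpace ℝ (Fin d) → EuclideanSpace ℝ (Fin d))
    (hS : ∀ j, Set.MapsTo (S j) K K)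
    (b : Fin m → ℝ) (hb : ∀ j, b j ∈ Set.Ioo (0 : ℝ) 1)
    (c : ℝ) (hc : c < 1)
    (hlip : ∀ j, ∀ x ∈ K, ∀ y ∈ K,
      b j * ‖x - y‖ ≤ ‖S j x - S j y‖ ∧ ‖S j x - S j y‖ ≤ c * ‖x - y‖)
    (hK₀ : K₀.Nonempty) (hK₀c : IsCompact K₀) (hK₀K : K₀ ⊆ K)
    (hinv : K₀ = ⋃ j, S j '' K₀)
    (hdisj : ∀ j k, j ≠ k → Disjoint (S j '' K₀) (S k '' K₀))
    (t : ℝ) (ht : 0 < t) (hsum : ∑ j, b j ^ t = 1) :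
    ENNReal.ofReal t ≤ dimH K₀ := by
  classical
  -- basic cardinality facts
  have hm0 : 0 < m := by
    rcases Nat.eq_zero_or_pos m with h | h
    · subst h
      obtain ⟨x, hx⟩ := hK₀
      rw [hinv] at hx
      simp only [Set.mem_iUnion] at hx
      obtain ⟨j, _⟩ := hx
      exact j.elim0
    · exact h
  have hm1 : 1 < m := by
    rcases lt_or_ge 1 m with h | h
    · exact h
    · exfalso
      have hm : m = 1 := le_antisymm h hm0
      subst hm
      have he : ∑ j : Fin 1, b j ^ t = b 0 ^ t := by simp
      rw [he] at hsum
      have := Real.rpow_lt_one (hb 0).1.le (hb 0).2 ht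
      linarith
  have hpiece : ∀ j, S j '' K₀ ⊆ K₀ := fun j =>
    (Set.subset_iUnion (fun k => S k '' K₀) j).trans hinv.symm.subset
  -- c is positive
  obtain ⟨j0, k0, hjk0⟩ : ∃ j k : Fin m, j ≠ k :=
    ⟨⟨0, hm0⟩, ⟨1, hm1⟩, by simp [Fin.ext_iff]⟩
  obtain ⟨x1, hx1⟩ : (S j0 '' K₀).Nonempty := hK₀.image _
  obtain ⟨x2, hx2⟩ : (S k0 '' K₀).Nonempty := hK₀.image _
  have hx12 : x1 ≠ x2 := fun h => (Set.disjoint_left.1 (hdisj j0 k0 hjk0)) hx1 (h ▸ hx2)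
  have hx1K : x1 ∈ K := hK₀K (hpiece j0 hx1)
  have hx2K : x2 ∈ K := hK₀K (hpiece k0 hx2)
  have hc0 : 0 < c := by
    have h := hlip j0 x1 hx1K x2 hx2K
    have hn : 0 < ‖x1 - x2‖ := norm_pos_iff.2 (sub_ne_zero.2 hx12)
    by_contra hcon
    push_neg at hcon
    have h1 : c * ‖x1 - x2‖ ≤ 0 := mul_nonpos_of_nonpos_of_nonneg hcon hn.le
    have h2 : 0 < b j0 * ‖x1 - x2‖ := mul_pos (hb j0).1 hn
    linarith [h.1, h.2]
  -- continuity
  have hcont : ∀ j, ContinuousOn (S j) K := by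
    intro j
    have hl : LipschitzOnWith c.toNNReal (S j) K := by
      rw [lipschitzOnWith_iff_dist_le_mul]
      intro x hx y hy
      rw [dist_eq_norm, dist_eq_norm, Real.coe_toNNReal c hc0.le]
      exact (hlip j x hx y hy).2
    exact hl.continuousOn
  -- iterated maps facts
  have hSWmaps := SW_mapsTo S K hS
  have hSWsub := SW_image_subset S K₀ hpiece
  have hbpos : ∀ j, 0 < b j := fun j => (hb j).1
  have hSWlow := SW_lower S K b hS (fun j => (hb j).1.le)
    (fun j x hx y hy => (hlip j x hx y hy).1)
  have hSWup := SW_upper S K c hS hc0.le (fun j x hx y hy => (hlip j x hx y hy).2)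
  have hSWcont := SW_continuousOn S K hS hcont
  have hSWcompact : ∀ w, IsCompact (SW S w '' K₀) := fun w =>
    hK₀c.image_of_continuousOn ((hSWcont w).mono hK₀K)
  -- digit system
  set q : Fin m → ℝ := fun j => b j ^ t with hq_def
  have hq : ∀ j, 0 < q j := fun j => Real.rpow_pos_of_pos (hb j).1 t
  have hcum1 : Falconer97.cum q m = 1 := by rw [Falconer97.cum_top]; exact hsum
  have hPPq : ∀ w : List (Fin m), PP q w = PP b w ^ t := by
    intro w
    induction w with
    | nil => simp
    | cons j w ih =>
      simp only [PP_cons]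
      rw [ih, ← Real.mul_rpow (hb j).1.le (PP_pos b hbpos w).le]
  -- base point and coding maps
  obtain ⟨x₀, hx₀⟩ := id hK₀
  have hx₀K : x₀ ∈ K := hK₀K hx₀
  have hcauchy : ∀ ω : ℕ → Fin m, CauchySeq (fun k => SW S (wordOf ω k) x₀) := by
    intro ω
    apply cauchySeq_of_le_geometric c (diam K₀) hc
    intro n
    have hy : S (ω n) x₀ ∈ K₀ := hpiece (ω n) ⟨x₀, hx₀, rfl⟩
    have heq : SW S (wordOf ω (n + 1)) x₀ = SW S (wordOf ω n) (S (ω n) x₀) := by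
      rw [wordOf_succ', SW_append]; rfl
    rw [heq, dist_eq_norm]
    have h1 := hSWup (wordOf ω n) x₀ hx₀K (S (ω n) x₀) (hK₀K hy)
    rw [wordOf_length] at h1
    calc ‖SW S (wordOf ω n) x₀ - SW S (wordOf ω n) (S (ω n) x₀)‖
        ≤ c ^ n * ‖x₀ - S (ω n) x₀‖ := h1
      _ ≤ c ^ n * diam K₀ := by
          apply mul_le_mul_of_nonneg_left _ (pow_nonneg hc0.le n)
          rw [← dist_eq_norm]
          exact dist_le_diam_of_mem hK₀c.isBounded hx₀ hy
      _ = diam K₀ * c ^ n := mul_comm _ _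
  have hglim : ∀ ω : ℕ → Fin m, ∃ y, Tendsto (fun k => SW S (wordOf ω k) x₀) atTop (𝓝 y) :=
    fun ω => cauchySeq_tendsto_of_complete (hcauchy ω)
  choose π hπ using hglim
  have hπ_mem : ∀ (ω : ℕ → Fin m) (k : ℕ), π ω ∈ SW S (wordOf ω k) '' K₀ := by
    intro ω k
    apply (hSWcompact (wordOf ω k)).isClosed.mem_of_tendsto (hπ ω)
    filter_upwards [eventually_ge_atTop k] with n hn
    obtain ⟨l, rfl⟩ : ∃ l, n = k + l := ⟨n - k, by omega⟩
    rw [wordOf_add, SW_append]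
    exact ⟨SW S (wordOf (fun i => ω (k + i)) l) x₀, hSWsub _ ⟨x₀, hx₀, rfl⟩, rfl⟩
  have hπK₀ : ∀ ω, π ω ∈ K₀ := by
    intro ω
    have := hπ_mem ω 0
    simpa using this
  -- the coding function from [0,1)
  set g : ℝ → EuclideanSpace ℝ (Fin d) := fun x => π (seqD q hm0 x) with hg_def
  have hgk_meas : ∀ k : ℕ, Measurable fun x : ℝ => SW S (wordOf (seqD q hm0 x) k) x₀ := by
    intro k
    have h1 : Measurable fun x : ℝ => (fun i : Fin k => seqD q hm0 x (i : ℕ)) :=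
      measurable_pi_lambda _ fun i => measurable_seqD q hm0 (i : ℕ)
    have h2 : Measurable fun v : Fin k → Fin m => SW S (List.ofFn v) x₀ :=
      measurable_of_countable _
    exact h2.comp h1
  have hg_meas : Measurable g := by
    apply measurable_of_tendsto_metrizable hgk_meas
    rw [tendsto_pi_nhds]
    intro x
    exact hπ (seqD q hm0 x)
  have hgK₀ : ∀ x, g x ∈ K₀ := fun x => hπK₀ _
  -- the measure
  set μ : Measure (EuclideanSpace ℝ (Fin d)) :=
    Measure.map g (volume.restrict (Set.Ico (0 : ℝ) 1)) with hμ_def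
  have hμ_apply : ∀ A : Set (EuclideanSpace ℝ (Fin d)), MeasurableSet A →
      μ A = volume (g ⁻¹' A ∩ Set.Ico (0 : ℝ) 1) := by
    intro A hA
    rw [hμ_def, Measure.map_apply hg_meas hA, Measure.restrict_apply (hg_meas hA)]
  have hμK₀ : μ K₀ = 1 := by
    rw [hμ_apply K₀ hK₀c.isClosed.measurableSet]
    have : g ⁻¹' K₀ = Set.univ := Set.eq_univ_of_forall hgK₀
    rw [this, Set.univ_inter, Real.volume_Ico]
    norm_num
  -- separation constant
  have hsep_pair : ∀ j k : Fin m, ∃ δ : ℝ, 0 < δ ∧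
      (j ≠ k → ∀ a ∈ S j '' K₀, ∀ a' ∈ S k '' K₀, δ ≤ dist a a') := by
    intro j k
    by_cases hjk : j = k
    · exact ⟨1, one_pos, fun h => absurd hjk h⟩
    · have hcj : IsCompact (S j '' K₀) := hK₀c.image_of_continuousOn ((hcont j).mono hK₀K)
      have hck : IsClosed (S k '' K₀) :=
        (hK₀c.image_of_continuousOn ((hcont k).mono hK₀K)).isClosed
      obtain ⟨r, hr0, hr⟩ := EMetric.exists_pos_forall_lt_edist hcj hck (hdisj j k hjk)
      refine ⟨r, hr0, fun _ a ha a' ha' => ?_⟩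
      have h1 := hr a ha a' ha'
      rw [edist_dist] at h1
      rw [← ENNReal.ofReal_coe_nnreal] at h1
      have := (ENNReal.ofReal_lt_ofReal_iff_of_nonneg r.coe_nonneg).1 h1
      linarith
  choose δf hδf0 hδfsep using hsep_pair
  obtain ⟨δ, hδ0, hδle⟩ : ∃ δ : ℝ, 0 < δ ∧ ∀ j k, δ ≤ δf j k := by
    refine ⟨(Finset.univ : Finset (Fin m × Fin m)).inf'
      ⟨(⟨0, hm0⟩, ⟨0, hm0⟩), Finset.mem_univ _⟩ (fun p => δf p.1 p.2), ?_, ?_⟩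
    · refine (Finset.lt_inf'_iff _).2 ?_
      exact fun p _ => hδf0 p.1 p.2
    · intro j k
      exact Finset.inf'_le _ (Finset.mem_univ (j, k))
  have hsep : ∀ j k, j ≠ k → ∀ a ∈ S j '' K₀, ∀ a' ∈ S k '' K₀, δ ≤ dist a a' :=
    fun j k hjk a ha a' ha' => le_trans (hδle j k) (hδfsep j k hjk a ha a' ha')
  -- separation of cylinder pieces
  have hsep_words : ∀ (u w₁ w₂ : List (Fin m)) (j k : Fin m), j ≠ k →
      ∀ a ∈ SW S (u ++ (j :: w₁)) '' K₀, ∀ a' ∈ SW S (u ++ (k :: w₂)) '' K₀,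
        PP b u * δ ≤ dist a a' := by
    intro u w₁ w₂ j k hjk a ha a' ha'
    rw [SW_append, Set.image_comp] at ha ha'
    obtain ⟨y, hy, rfl⟩ := ha
    obtain ⟨y', hy', rfl⟩ := ha'
    have hyj : y ∈ S j '' K₀ := by
      rw [SW_cons, Set.image_comp] at hy
      exact Set.image_mono (f := S j) (hSWsub w₁) hy
    have hy'k : y' ∈ S k '' K₀ := by
      rw [SW_cons, Set.image_comp] at hy'
      exact Set.image_mono (f := S k) (hSWsub w₂) hy'
    have hδd : δ ≤ dist y y' := hsep j k hjk y hyj y' hy'k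
    have hyK : y ∈ K := hK₀K (hpiece j hyj)
    have hy'K : y' ∈ K := hK₀K (hpiece k hy'k)
    have hlow := hSWlow u y hyK y' hy'K
    rw [dist_eq_norm] at hδd ⊢
    calc PP b u * δ ≤ PP b u * ‖y - y'‖ :=
          mul_le_mul_of_nonneg_left hδd (PP_pos b hbpos u).le
      _ ≤ ‖SW S u y - SW S u y'‖ := hlow
  -- max contraction ratio
  obtain ⟨bm, hbm1, hbm0, hbmle⟩ : ∃ bm : ℝ, bm < 1 ∧ 0 < bm ∧ ∀ j, b j ≤ bm := by
    refine ⟨Finset.univ.sup' ⟨⟨0, hm0⟩, Finset.mem_univ _⟩ b, ?_, ?_, ?_⟩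
    · refine (Finset.sup'_lt_iff _).2 ?_
      exact fun j _ => (hb j).2
    · refine (Finset.lt_sup'_iff _).2 ?_
      exact ⟨⟨0, hm0⟩, Finset.mem_univ _, (hb ⟨0, hm0⟩).1⟩
    · exact fun j => Finset.le_sup' b (Finset.mem_univ j)
  have hPPb_le : ∀ (ω : ℕ → Fin m) (k : ℕ), PP b (wordOf ω k) ≤ bm ^ k := by
    intro ω k
    induction k with
    | zero => simp
    | succ k ih =>
      rw [wordOf_succ', PP_append]
      have h1 : PP b [ω k] = b (ω k) := by simp [PP]
      rw [h1]
      calc PP b (wordOf ω k) * b (ω k) ≤ bm ^ k * bm :=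
            mul_le_mul ih (hbmle _) (hb _).1.le (pow_nonneg hbm0.le k)
        _ = bm ^ (k + 1) := by ring
  -- key ball estimate
  have hball : ∀ (z : EuclideanSpace ℝ (Fin d)) (r : ℝ), 0 < r →
      μ (ball z r) ≤ ENNReal.ofReal ((2 * r / δ) ^ t) := by
    intro z r hr
    rw [hμ_apply _ measurableSet_ball]
    by_cases hcase : δ ≤ 2 * r
    · calc volume (g ⁻¹' ball z r ∩ Set.Ico (0 : ℝ) 1)
          ≤ volume (Set.Ico (0 : ℝ) 1) := measure_mono Set.inter_subset_right
        _ = 1 := by rw [Real.volume_Ico]; norm_num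
        _ ≤ ENNReal.ofReal ((2 * r / δ) ^ t) := by
            rw [ENNReal.one_le_ofReal]
            apply Real.one_le_rpow _ ht.le
            rw [le_div_iff₀ hδ0]
            linarith
    · push_neg at hcase
      rcases Set.eq_empty_or_nonempty (g ⁻¹' ball z r ∩ Set.Ico (0 : ℝ) 1) with he | hne
      · rw [he]
        simp
      obtain ⟨xs, hxs⟩ := hne
      have hcut : ∀ ω : ℕ → Fin m, ∃ k, δ * PP b (wordOf ω k) ≤ 2 * r := by
        intro ω
        obtain ⟨k, hk⟩ := exists_pow_lt_of_lt_one (show (0 : ℝ) < 2 * r / δ by positivity) hbm1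
        refine ⟨k, ?_⟩
        have h1 : PP b (wordOf ω k) < 2 * r / δ := lt_of_le_of_lt (hPPb_le ω k) hk
        rw [lt_div_iff₀ hδ0] at h1
        linarith [h1]
      set ωs := seqD q hm0 xs with hωs
      set ks := Nat.find (hcut ωs) with hksdef
      have hks : δ * PP b (wordOf ωs ks) ≤ 2 * r := Nat.find_spec (hcut ωs)
      have hksmin : ∀ i, i < ks → 2 * r < δ * PP b (wordOf ωs i) := by
        intro i hi
        have := Nat.find_min (hcut ωs) hi
        push_neg at this
        exact this
      set ws := wordOf ωs ks with hwsdef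
      -- all points of the set share the cut word
      have hkey : ∀ x ∈ g ⁻¹' ball z r ∩ Set.Ico (0 : ℝ) 1,
          wordOf (seqD q hm0 x) ks = ws := by
        intro x hx
        set ω := seqD q hm0 x with hω
        set k' := Nat.find (hcut ω) with hk'def
        have hk' : δ * PP b (wordOf ω k') ≤ 2 * r := Nat.find_spec (hcut ω)
        have hk'min : ∀ i, i < k' → 2 * r < δ * PP b (wordOf ω i) := by
          intro i hi
          have := Nat.find_min (hcut ω) hi
          push_neg at this
          exact this
        have hdxx : dist (g x) (g xs) < 2 * r := by
          have h1 : g x ∈ ball z r := hx.1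
          have h2 : g xs ∈ ball z r := hxs.1
          rw [mem_ball] at h1 h2
          calc dist (g x) (g xs) ≤ dist (g x) z + dist z (g xs) := dist_triangle _ _ _
            _ < r + r := by rw [dist_comm z (g xs)]; exact add_lt_add h1 h2
            _ = 2 * r := by ring
        have hagree' : ∀ i, i < k' → i < ks → ω i = ωs i := by
          intro i
          induction i using Nat.strong_induction_on with
          | _ i ih =>
            intro h1 h2
            by_contra hnei
            have hu : wordOf ω i = wordOf ωs i :=
              congrArg List.ofFn (funext fun l =>
                ih l l.isLt (lt_trans l.isLt h1) (lt_trans l.isLt h2))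
            have hgx : g x ∈ SW S (wordOf ω i ++ (ω i :: [])) '' K₀ := by
              rw [← wordOf_succ']
              exact hπ_mem ω (i + 1)
            have hgxs : g xs ∈ SW S (wordOf ω i ++ (ωs i :: [])) '' K₀ := by
              rw [hu, ← wordOf_succ']
              exact hπ_mem ωs (i + 1)
            have hsw := hsep_words (wordOf ω i) [] [] (ω i) (ωs i) hnei
              (g x) hgx (g xs) hgxs
            have hmin := hk'min i h1
            rw [mul_comm] at hmin
            linarith
        have hkk : k' = ks := by
          by_contra hne
          rcases Nat.lt_or_ge k' ks with h | h
          · have hu : wordOf ωs k' = wordOf ω k' :=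
              congrArg List.ofFn (funext fun l =>
                (hagree' l l.isLt (lt_trans l.isLt h)).symm)
            have h2 := hksmin k' h
            rw [hu] at h2
            linarith
          · have h' : ks < k' := by omega
            have hu : wordOf ω ks = wordOf ωs ks :=
              congrArg List.ofFn (funext fun l =>
                hagree' l (lt_trans l.isLt h') l.isLt)
            have h2 := hk'min ks h'
            rw [hu] at h2
            linarith
        show wordOf ω ks = wordOf ωs ks
        exact congrArg List.ofFn (funext fun l => hagree' l (by rw [hkk]; exact l.isLt) l.isLt)
      -- conclude the volume bound
      have hlen : ws.length = ks := wordOf_length ωs ks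
      have hsub : g ⁻¹' ball z r ∩ Set.Ico (0 : ℝ) 1 ⊆
          {x : ℝ | x ∈ Set.Ico (0 : ℝ) 1 ∧ wordOf (seqD q hm0 x) ws.length = ws} := by
        intro x hx
        refine ⟨hx.2, ?_⟩
        rw [hlen]
        exact hkey x hx
      calc volume (g ⁻¹' ball z r ∩ Set.Ico (0 : ℝ) 1)
          ≤ volume {x : ℝ | x ∈ Set.Ico (0 : ℝ) 1 ∧ wordOf (seqD q hm0 x) ws.length = ws} :=
            measure_mono hsub
        _ = volume (Set.Ico (LL q ws) (LL q ws + PP q ws)) := by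
            rw [interval_eq q hm0 hq hcum1 ws]
        _ = ENNReal.ofReal (PP q ws) := by rw [Real.volume_Ico]; ring_nf
        _ ≤ ENNReal.ofReal ((2 * r / δ) ^ t) := by
            apply ENNReal.ofReal_le_ofReal
            rw [hPPq ws]
            apply Real.rpow_le_rpow (PP_pos b hbpos ws).le _ ht.le
            rw [le_div_iff₀ hδ0]
            rw [mul_comm] at hks
            exact hks
  -- mass distribution principle
  set C : ℝ≥0∞ := ENNReal.ofReal ((2 / δ) ^ t) with hC_def
  have hC0 : C ≠ 0 := by
    rw [hC_def]
    simp only [ne_eq, ENNReal.ofReal_eq_zero, not_le]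
    positivity
  have hCtop : C ≠ ⊤ := ENNReal.ofReal_ne_top
  have hmass : ∀ s : Set (EuclideanSpace ℝ (Fin d)), μ s ≤ C * (EMetric.diam s) ^ t := by
    intro s
    rcases Set.eq_empty_or_nonempty s with rfl | ⟨y, hy⟩
    · simp
    rcases eq_or_ne (EMetric.diam s) ⊤ with hdiam | hdiam
    · rw [hdiam, ENNReal.top_rpow_of_pos ht, ENNReal.mul_top hC0]
      exact le_top
    set D := Metric.diam s with hD_def
    have hD0 : 0 ≤ D := diam_nonneg
    have hDe : EMetric.diam s = ENNReal.ofReal D := (ENNReal.ofReal_toReal hdiam).symm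
    have hbound : ∀ ε : ℝ, 0 < ε → μ s ≤ ENNReal.ofReal ((2 / δ) ^ t * (D + ε) ^ t) := by
      intro ε hε
      have hsb : Bornology.IsBounded s := Metric.isBounded_iff_ediam_ne_top.2 hdiam
      have hsub : s ⊆ ball y (D + ε) := by
        intro z hz
        rw [mem_ball]
        calc dist z y ≤ D := dist_le_diam_of_mem hsb hz hy
          _ < D + ε := by linarith
      calc μ s ≤ μ (ball y (D + ε)) := measure_mono hsub
        _ ≤ ENNReal.ofReal ((2 * (D + ε) / δ) ^ t) := hball y (D + ε) (by positivity)
        _ = ENNReal.ofReal ((2 / δ) ^ t * (D + ε) ^ t) := by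
            congr 1
            rw [← Real.mul_rpow (by positivity) (by positivity)]
            congr 1
            ring
    have hmono : μ s ≤ ENNReal.ofReal ((2 / δ) ^ t * D ^ t) := by
      have h1 : Tendsto (fun ε : ℝ => D + ε) (𝓝[>] (0 : ℝ)) (𝓝 D) := by
        have h : Tendsto (fun ε : ℝ => D + ε) (𝓝 (0 : ℝ)) (𝓝 (D + 0)) :=
          (continuous_const.add continuous_id).tendsto 0
        rw [add_zero] at h
        exact h.mono_left nhdsWithin_le_nhds
      have h2 : Tendsto (fun ε : ℝ => (D + ε) ^ t) (𝓝[>] (0 : ℝ)) (𝓝 (D ^ t)) :=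
        ((Real.continuousAt_rpow_const D t (Or.inr ht.le)).tendsto).comp h1
      have h3 : Tendsto (fun ε : ℝ => ENNReal.ofReal ((2 / δ) ^ t * (D + ε) ^ t))
          (𝓝[>] (0 : ℝ)) (𝓝 (ENNReal.ofReal ((2 / δ) ^ t * D ^ t))) :=
        (ENNReal.continuous_ofReal.tendsto _).comp (h2.const_mul _)
      apply ge_of_tendsto h3
      filter_upwards [self_mem_nhdsWithin] with ε hε
      exact hbound ε hε
    calc μ s ≤ ENNReal.ofReal ((2 / δ) ^ t * D ^ t) := hmono
      _ = C * ENNReal.ofReal (D ^ t) := by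
          rw [hC_def, ← ENNReal.ofReal_mul (by positivity)]
      _ = C * (EMetric.diam s) ^ t := by
          rw [hDe, ← ENNReal.ofReal_rpow_of_nonneg hD0 ht.le]
  have hfrost : (C⁻¹ • μ) ≤ μH[t] := by
    apply MeasureTheory.Measure.le_hausdorffMeasure t _ ⊤ ENNReal.zero_lt_top
    intro s _
    rw [Measure.smul_apply, smul_eq_mul]
    calc C⁻¹ * μ s ≤ C⁻¹ * (C * (EMetric.diam s) ^ t) :=
          mul_le_mul_right (hmass s) _
      _ = (EMetric.diam s) ^ t := by
          rw [← mul_assoc, ENNReal.inv_mul_cancel hC0 hCtop, one_mul]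
  have hH : μH[t] K₀ ≠ 0 := by
    intro h0
    have h1 := Measure.le_iff'.1 hfrost K₀
    rw [h0, Measure.smul_apply, smul_eq_mul, hμK₀, mul_one] at h1
    exact (ENNReal.inv_ne_zero.2 hCtop) (le_antisymm h1 zero_le)
  have htt : ((t.toNNReal : ℝ≥0) : ℝ) = t := Real.coe_toNNReal t ht.le
  have hfin : (t.toNNReal : ℝ≥0∞) ≤ dimH K₀ := by
    apply le_dimH_of_hausdorffMeasure_ne_zero (d := t.toNNReal)
    rw [htt]
    exact hH
  exact hfin
end
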